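/- Let μ be a probability measure on a measurable space Ω, let X, Y : Ω → ℝ be random variables in L²(μ) with Y ≥ 0 μ-almost everywhere and Var(Y) > 0, and let λ ≥ 0. Set ε₀ := max(0, −Cov(X, Y)/Var(Y)). Then the function ε ↦ −E[X + ε·Y] − λ·√(Var(X + ε·Y)) is antitone (monotone nonincreasing) on [ε₀, ∞). -/

import Mathlib

open MeasureTheory

/-- Variance `Var(Z) := E[(Z − E[Z])²]`. -/
noncomputable def Var {Ω : Type*} [MeasurableSpace Ω] (μ : Measure Ω) (Z : Ω → ℝ) : ℝ :=
  ∫ ω, (Z ω - ∫ ω', Z ω' ∂μ) ^ 2 ∂μ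

/-- Covariance `Cov(X, Y) := E[(X − E[X])(Y − E[Y])]`. -/
noncomputable def Cov {Ω : Type*} [MeasurableSpace Ω] (μ : Measure Ω) (X Y : Ω → ℝ) : ℝ :=
  ∫ ω, (X ω - ∫ ω', X ω' ∂μ) * (Y ω - ∫ ω', Y ω' ∂μ) ∂μ

lemma memLp_mul_integrable {Ω : Type*} [MeasurableSpace Ω] {μ : Measure Ω}
    {f g : Ω → ℝ} (hf : MemLp f 2 μ) (hg : MemLp g 2 μ) :
    Integrable (fun ω => f ω * g ω) μ := by
  have h : MemLp (f • g) 1 μ := by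
    refine MemLp.smul (hpqr := ⟨?_⟩) hg hf
    rw [ENNReal.inv_two_add_inv_two]
    norm_num
  exact (memLp_one_iff_integrable.mp h)

lemma var_expand {Ω : Type*} [MeasurableSpace Ω] (μ : Measure Ω) [IsProbabilityMeasure μ]
    (X Y : Ω → ℝ) (hX : MemLp X 2 μ) (hY : MemLp Y 2 μ) (ε : ℝ) :
    Var μ (fun ω => X ω + ε * Y ω)
      = Var μ X + 2 * ε * Cov μ X Y + ε ^ 2 * Var μ Y := by
  have hXi : Integrable X μ := hX.integrable one_le_two
  have hYi : Integrable Y μ := hY.integrable one_le_two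
  have hmean : (∫ ω, (X ω + ε * Y ω) ∂μ) = (∫ ω, X ω ∂μ) + ε * ∫ ω, Y ω ∂μ := by
    rw [integral_add hXi (hYi.const_mul ε), integral_const_mul]
  have hX' : MemLp (fun ω => X ω - ∫ ω', X ω' ∂μ) 2 μ := hX.sub (memLp_const _)
  have hY' : MemLp (fun ω => Y ω - ∫ ω', Y ω' ∂μ) 2 μ := hY.sub (memLp_const _)
  have hXX : Integrable (fun ω => (X ω - ∫ ω', X ω' ∂μ) ^ 2) μ := hX'.integrable_sq
  have hYY : Integrable (fun ω => (Y ω - ∫ ω', Y ω' ∂μ) ^ 2) μ := hY'.integrable_sq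
  have hXY : Integrable (fun ω => (X ω - ∫ ω', X ω' ∂μ) * (Y ω - ∫ ω', Y ω' ∂μ)) μ :=
    memLp_mul_integrable hX' hY'
  unfold Var Cov
  rw [hmean]
  have hcongr : ∀ ω, (X ω + ε * Y ω - ((∫ ω', X ω' ∂μ) + ε * ∫ ω', Y ω' ∂μ)) ^ 2
      = (X ω - ∫ ω', X ω' ∂μ) ^ 2
        + 2 * ε * ((X ω - ∫ ω', X ω' ∂μ) * (Y ω - ∫ ω', Y ω' ∂μ))
        + ε ^ 2 * (Y ω - ∫ ω', Y ω' ∂μ) ^ 2 := fun ω => by ring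
  simp_rw [hcongr]
  have hA : Integrable (fun ω => (X ω - ∫ ω', X ω' ∂μ) ^ 2
      + 2 * ε * ((X ω - ∫ ω', X ω' ∂μ) * (Y ω - ∫ ω', Y ω' ∂μ))) μ := by
    exact hXX.add (hXY.const_mul _)
  have hB : Integrable (fun ω => ε ^ 2 * (Y ω - ∫ ω', Y ω' ∂μ) ^ 2) μ := by
    exact hYY.const_mul _
  have hC : Integrable (fun ω => 2 * ε * ((X ω - ∫ ω', X ω' ∂μ) * (Y ω - ∫ ω', Y ω' ∂μ))) μ := by
    exact hXY.const_mul _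
  rw [integral_add hA hB, integral_add hXX hC, integral_const_mul, integral_const_mul]

/-- Per-policy eventual ε-antitonicity: for `X, Y ∈ L²(μ)` with `Y ≥ 0` a.e.,
`Var(Y) > 0` and `λ ≥ 0`, the map
`ε ↦ −E[X + ε·Y] − λ·√(Var(X + ε·Y))` is nonincreasing on
`[max(0, −Cov(X, Y)/Var(Y)), ∞)`. -/
theorem stmt_8 {Ω : Type*} [MeasurableSpace Ω] (μ : Measure Ω) [IsProbabilityMeasure μ]
    (X Y : Ω → ℝ) (hX : MemLp X 2 μ) (hY : MemLp Y 2 μ)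
    (hY0 : ∀ᵐ ω ∂μ, 0 ≤ Y ω) (hVarY : 0 < Var μ Y)
    (lam : ℝ) (hlam : 0 ≤ lam) :
    AntitoneOn (fun ε : ℝ =>
        -(∫ ω, (X ω + ε * Y ω) ∂μ) -
          lam * Real.sqrt (Var μ (fun ω => X ω + ε * Y ω)))
      (Set.Ici (max 0 (-(Cov μ X Y) / Var μ Y))) := by
  have hXi : Integrable X μ := hX.integrable one_le_two
  have hYi : Integrable Y μ := hY.integrable one_le_two
  have hEY : 0 ≤ ∫ ω, Y ω ∂μ := integral_nonneg_of_ae hY0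
  intro s hs t ht hst
  simp only [Set.mem_Ici, le_max_iff] at hs ht
  have hs' : -(Cov μ X Y) / Var μ Y ≤ s := le_of_max_le_right (by simpa using hs)
  have hCov : -(Cov μ X Y) ≤ s * Var μ Y := by
    rw [div_le_iff₀ hVarY] at hs'; linarith
  have hmean : ∀ ε : ℝ, (∫ ω, (X ω + ε * Y ω) ∂μ)
      = (∫ ω, X ω ∂μ) + ε * ∫ ω, Y ω ∂μ := fun ε => by
    rw [integral_add hXi (hYi.const_mul ε), integral_const_mul]
  simp only [hmean, var_expand μ X Y hX hY]
  have hq : Var μ X + 2 * s * Cov μ X Y + s ^ 2 * Var μ Y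
      ≤ Var μ X + 2 * t * Cov μ X Y + t ^ 2 * Var μ Y := by
    nlinarith [sq_nonneg (t - s), mul_le_mul_of_nonneg_left hCov (sub_nonneg.mpr hst)]
  have hsq : Real.sqrt (Var μ X + 2 * s * Cov μ X Y + s ^ 2 * Var μ Y)
      ≤ Real.sqrt (Var μ X + 2 * t * Cov μ X Y + t ^ 2 * Var μ Y) :=
    Real.sqrt_le_sqrt hq
  have h1 : s * ∫ ω, Y ω ∂μ ≤ t * ∫ ω, Y ω ∂μ := mul_le_mul_of_nonneg_right hst hEY
  have h2 : lam * Real.sqrt (Var μ X + 2 * s * Cov μ X Y + s ^ 2 * Var μ Y)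
      ≤ lam * Real.sqrt (Var μ X + 2 * t * Cov μ X Y + t ^ 2 * Var μ Y) :=
    mul_le_mul_of_nonneg_left hsq hlam
  linarith
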